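/- Let x be a random unit vector in ℝ^d with Σ = E[xxᵀ] positive definite having minimum eigenvalue λ_min, and let γ ∈ (0,2). Then γ(2-γ)λ_min ∈ (0,1], and for any fixed vector z ∈ ℝ^d independent of x, E[‖(I - γ xxᵀ)z‖²] ≤ (1 - γ(2-γ)λ_min)‖z‖². -/

import Mathlib

open Matrix MeasureTheory

/-- Let `x` be a random unit vector in `ℝ^d` with `Σ = E[xxᵀ]` positive definite
having minimum eigenvalue `λ_min`, and let `γ ∈ (0,2)`. Then `γ(2-γ)λ_min ∈ (0,1]`,
and for any fixed `z ∈ ℝ^d`, `E[‖(I - γ xxᵀ)z‖²] ≤ (1 - γ(2-γ)λ_min)‖z‖²`. -/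
theorem lms_expected_contraction {d : ℕ} {Ω : Type*} [MeasurableSpace Ω]
    (μ : Measure Ω) [IsProbabilityMeasure μ]
    (x : Ω → Fin d → ℝ) (hmeas : Measurable x)
    (hsphere : ∀ ω, x ω ⬝ᵥ x ω = 1)
    (Sx : Matrix (Fin d) (Fin d) ℝ)
    (hS : ∀ i j, Sx i j = ∫ ω, x ω i * x ω j ∂μ)
    (hpd : Sx.PosDef)
    (lammin : ℝ)
    (heig : ∃ v : Fin d → ℝ, v ⬝ᵥ v = 1 ∧ Sx *ᵥ v = lammin • v)
    (hlow : ∀ v : Fin d → ℝ, lammin * (v ⬝ᵥ v) ≤ v ⬝ᵥ (Sx *ᵥ v))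
    (γ : ℝ) (hγ0 : 0 < γ) (hγ2 : γ < 2)
    (z : Fin d → ℝ) :
    (0 < γ * (2 - γ) * lammin ∧ γ * (2 - γ) * lammin ≤ 1) ∧
    ∫ ω, (((1 : Matrix (Fin d) (Fin d) ℝ) - γ • vecMulVec (x ω) (x ω)) *ᵥ z) ⬝ᵥ
        (((1 : Matrix (Fin d) (Fin d) ℝ) - γ • vecMulVec (x ω) (x ω)) *ᵥ z) ∂μ ≤
      (1 - γ * (2 - γ) * lammin) * (z ⬝ᵥ z) := by
  obtain ⟨v, hv1, hvev⟩ := heig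
  -- pointwise bounds on coordinates
  have hxsq : ∀ ω i, x ω i * x ω i ≤ 1 := by
    intro ω i
    have h := hsphere ω
    simp only [dotProduct] at h
    calc x ω i * x ω i ≤ ∑ k, x ω k * x ω k :=
          Finset.single_le_sum (fun k _ => mul_self_nonneg (x ω k)) (Finset.mem_univ i)
      _ = 1 := h
  have hInt : ∀ i j, Integrable (fun ω => x ω i * x ω j) μ := by
    intro i j
    refine (integrable_const (1:ℝ)).mono' ?_ (ae_of_all _ fun ω => ?_)
    · exact (((measurable_pi_apply i).comp hmeas).mul
        ((measurable_pi_apply j).comp hmeas)).aestronglyMeasurable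
    · rw [Real.norm_eq_abs, abs_mul]
      nlinarith [abs_nonneg (x ω i), abs_nonneg (x ω j), sq_abs (x ω i), sq_abs (x ω j),
        hxsq ω i, hxsq ω j, mul_self_nonneg (|x ω i| - |x ω j|),
        mul_self_nonneg (|x ω i| - 1), mul_self_nonneg (|x ω j| - 1)]
  -- expansion of the squared dot product
  have h1 : ∀ (w : Fin d → ℝ) ω,
      (x ω ⬝ᵥ w) * (x ω ⬝ᵥ w) = ∑ i, ∑ j, w i * w j * (x ω i * x ω j) := by
    intro w ω
    simp only [dotProduct, Finset.sum_mul_sum]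
    exact Finset.sum_congr rfl fun i _ => Finset.sum_congr rfl fun j _ => by ring
  have hIntd : ∀ w : Fin d → ℝ, Integrable (fun ω => (x ω ⬝ᵥ w) * (x ω ⬝ᵥ w)) μ := by
    intro w
    have : (fun ω => (x ω ⬝ᵥ w) * (x ω ⬝ᵥ w))
        = fun ω => ∑ i, ∑ j, w i * w j * (x ω i * x ω j) := funext (h1 w)
    rw [this]
    exact integrable_finset_sum _ fun i _ =>
      integrable_finset_sum _ fun j _ => (hInt i j).const_mul _
  -- key identity: second moment of x⬝w equals quadratic form of Sx
  have hkey : ∀ w : Fin d → ℝ, ∫ ω, (x ω ⬝ᵥ w) * (x ω ⬝ᵥ w) ∂μ = w ⬝ᵥ (Sx *ᵥ w) := by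
    intro w
    have hfe : (fun ω => (x ω ⬝ᵥ w) * (x ω ⬝ᵥ w))
        = fun ω => ∑ i, ∑ j, w i * w j * (x ω i * x ω j) := funext (h1 w)
    rw [hfe, integral_finset_sum _ (fun i _ =>
      integrable_finset_sum _ fun j _ => (hInt i j).const_mul _)]
    have hstep : ∀ i, ∫ ω, ∑ j, w i * w j * (x ω i * x ω j) ∂μ
        = ∑ j, w i * w j * Sx i j := by
      intro i
      rw [integral_finset_sum _ (fun j _ => (hInt i j).const_mul _)]
      exact Finset.sum_congr rfl fun j _ => by rw [integral_const_mul, hS]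
    simp_rw [hstep]
    simp only [dotProduct, mulVec, Finset.mul_sum]
    exact Finset.sum_congr rfl fun i _ => Finset.sum_congr rfl fun j _ => by ring
  -- lammin is positive
  have hvne : v ≠ 0 := by
    intro h
    rw [h] at hv1
    simp [dotProduct] at hv1
  have hquad : v ⬝ᵥ (Sx *ᵥ v) = lammin := by
    rw [hvev, dotProduct_smul, smul_eq_mul, hv1, mul_one]
  have hlampos : 0 < lammin := by
    have := hpd.dotProduct_mulVec_pos hvne
    simpa [hquad] using this
  -- lammin ≤ 1 by Cauchy–Schwarz
  have hlam1 : lammin ≤ 1 := by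
    have hb : ∀ ω, (x ω ⬝ᵥ v) * (x ω ⬝ᵥ v) ≤ 1 := by
      intro ω
      have hcs := Finset.sum_mul_sq_le_sq_mul_sq Finset.univ (x ω) v
      have hx := hsphere ω
      simp only [dotProduct] at hx ⊢
      have hv1' := hv1
      simp only [dotProduct] at hv1'
      have e1 : ∑ i, x ω i ^ 2 = 1 := by simpa [pow_two] using hx
      have e2 : ∑ i, v i ^ 2 = 1 := by simpa [pow_two] using hv1'
      rw [e1, e2, one_mul] at hcs
      calc (∑ i, x ω i * v i) * (∑ i, x ω i * v i) = (∑ i, x ω i * v i) ^ 2 := (sq _).symm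
        _ ≤ 1 := hcs
    have := integral_mono (hIntd v) (integrable_const 1) hb
    rw [hkey v, hquad] at this
    simpa using this
  have hc0 : 0 < γ * (2 - γ) := mul_pos hγ0 (by linarith)
  refine ⟨⟨by positivity, by nlinarith [sq_nonneg (γ - 1)]⟩, ?_⟩
  -- pointwise expansion of the contraction
  have hvmv : ∀ ω, vecMulVec (x ω) (x ω) *ᵥ z = (x ω ⬝ᵥ z) • (x ω) := by
    intro ω
    funext i
    simp only [mulVec, vecMulVec, dotProduct, Pi.smul_apply, smul_eq_mul, of_apply]
    rw [Finset.sum_mul]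
    exact Finset.sum_congr rfl fun j _ => by ring
  have hpt : ∀ ω, (((1 : Matrix (Fin d) (Fin d) ℝ) - γ • vecMulVec (x ω) (x ω)) *ᵥ z) ⬝ᵥ
      (((1 : Matrix (Fin d) (Fin d) ℝ) - γ • vecMulVec (x ω) (x ω)) *ᵥ z)
      = z ⬝ᵥ z - (γ * (2 - γ)) * ((x ω ⬝ᵥ z) * (x ω ⬝ᵥ z)) := by
    intro ω
    have hx := hsphere ω
    rw [sub_mulVec, one_mulVec, smul_mulVec, hvmv ω]
    simp only [dotProduct_sub, sub_dotProduct, smul_dotProduct, dotProduct_smul, smul_eq_mul,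
      smul_smul]
    rw [dotProduct_comm (x ω) z]
    linear_combination (γ ^ 2 * (z ⬝ᵥ x ω) * (z ⬝ᵥ x ω)) * hx
  calc ∫ ω, (((1 : Matrix (Fin d) (Fin d) ℝ) - γ • vecMulVec (x ω) (x ω)) *ᵥ z) ⬝ᵥ
        (((1 : Matrix (Fin d) (Fin d) ℝ) - γ • vecMulVec (x ω) (x ω)) *ᵥ z) ∂μ
      = ∫ ω, (z ⬝ᵥ z - (γ * (2 - γ)) * ((x ω ⬝ᵥ z) * (x ω ⬝ᵥ z))) ∂μ := by
        exact integral_congr_ae (ae_of_all _ hpt)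
    _ = z ⬝ᵥ z - (γ * (2 - γ)) * (z ⬝ᵥ (Sx *ᵥ z)) := by
        rw [integral_sub (integrable_const _) ((hIntd z).const_mul _), integral_const,
          integral_const_mul, hkey z]
        simp
    _ ≤ (1 - γ * (2 - γ) * lammin) * (z ⬝ᵥ z) := by
        have := hlow z
        nlinarith [mul_le_mul_of_nonneg_left this (le_of_lt hc0)]
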